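/- Let s₀, t₀, s₁, t₁ be finite-to-one functions from successor ordinals into ω, with |s₀| = |s₁| < |t₀| = |t₁|, such that t₀ − t₁ and s₀ − s₁ are continuous ℤ-valued sequences (i.e., s₀ ≡ s₁ and t₀ ≡ t₁ are ρ₂-modifications of one another). Let r_i be the result of writing s_i over t_i, i.e., r_i(ξ) = s_i(ξ) for ξ < |s_i| and r_i(ξ) = t_i(ξ) for |s_i| ≤ ξ < |t_i|. Then r₀ − r₁ is a continuous ℤ-valued sequence (r₀ ≡ r₁). -/

import Mathlib

universe u

/-- A ℤ-valued sequence is continuous below `α` if at every limit ordinal `l < α` it is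
eventually constant below `l` with value `m l`. -/
def ContinuousBelow (m : Ordinal.{u} → ℤ) (α : Ordinal.{u}) : Prop :=
  ∀ l < α, Order.IsSuccLimit l → ∃ β < l, ∀ ξ, β ≤ ξ → ξ ≤ l → m ξ = m l

/-- `f` is finite-to-one on its domain `α`. -/
def FinToOne (f : Ordinal.{u} → ℕ) (α : Ordinal.{u}) : Prop :=
  ∀ k : ℕ, {ξ : Ordinal.{u} | ξ < α ∧ f ξ = k}.Finite

/-- Writing equivalent sequences over equivalent sequences yields equivalent sequences:
if `s₀ ≡ s₁` (length `a`) and `t₀ ≡ t₁` (length `b > a`), then the results `rᵢ` of writing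
`sᵢ` over `tᵢ` satisfy `r₀ ≡ r₁`. -/
theorem stmt9 (a b : Ordinal.{u}) (ha : ∃ a', a = a' + 1) (hb : ∃ b', b = b' + 1)
    (hab : a < b) (s₀ s₁ t₀ t₁ : Ordinal.{u} → ℕ)
    (hs₀ : FinToOne s₀ a) (hs₁ : FinToOne s₁ a) (ht₀ : FinToOne t₀ b) (ht₁ : FinToOne t₁ b)
    (hs : ContinuousBelow (fun ξ => (s₀ ξ : ℤ) - (s₁ ξ : ℤ)) a)
    (ht : ContinuousBelow (fun ξ => (t₀ ξ : ℤ) - (t₁ ξ : ℤ)) b) :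
    ContinuousBelow
      (fun ξ => ((if ξ < a then s₀ ξ else t₀ ξ : ℕ) : ℤ) -
        ((if ξ < a then s₁ ξ else t₁ ξ : ℕ) : ℤ)) b := by
  intro l hl hlim
  rcases lt_or_ge l a with hla | hal
  · obtain ⟨β, hβ, hconst⟩ := hs l hla hlim
    refine ⟨β, hβ, fun ξ hβξ hξl => ?_⟩
    have h1 : ξ < a := lt_of_le_of_lt hξl hla
    simp only [if_pos h1, if_pos hla]
    exact hconst ξ hβξ hξl
  · have hal' : a < l := by
      rcases ha with ⟨a', rfl⟩
      rcases hal.lt_or_eq with h | h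
      · exact h
      · exact absurd (h ▸ hlim) (Order.not_isSuccLimit_add_one a')
    obtain ⟨β, hβ, hconst⟩ := ht l hl hlim
    refine ⟨max β a, max_lt hβ hal', fun ξ hβξ hξl => ?_⟩
    have h1 : ¬ ξ < a := not_lt.mpr (le_trans (le_max_right β a) hβξ)
    have h2 : ¬ l < a := not_lt.mpr hal
    simp only [if_neg h1, if_neg h2]
    exact hconst ξ (le_trans (le_max_left β a) hβξ) hξl
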